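/- Let d ≥ 1, 0 < λ ≤ Λ, C₀ > c₀ > 0, L > R > 0, and let ν ∈ ℝ^d be a unit vector. Suppose w is upper semicontinuous on the closure of Q_L and is a viscosity subsolution of ∂_t w − P⁺(D²w) = 0 in Q_L, that w(x,t) ≤ c₀ for all (x,t) ∈ ∂P_ν ∩ closure(Q_L), and that w(x,t) ≤ C₀ on closure(Q_L). Then there exists a constant C depending only on λ, Λ, d and C₀ such that w(x,t) ≤ c₀ + C·R/L for all (x,t) ∈ Q_R. -/

import Mathlib

open Set Filter Topology
open scoped Classical

noncomputable section

abbrev Mat (d : ℕ) := Matrix (Fin d) (Fin d) ℝ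
abbrev Spc (d : ℕ) := EuclideanSpace ℝ (Fin d)

/-- Euclidean dot product. -/
def dotR {d : ℕ} (x y : Spc d) : ℝ := ∑ i, x i * y i

/-- The vector in `ℝ^d` with integer coordinates `k`. -/
def intVec {d : ℕ} (k : Fin d → ℤ) : Spc d :=
  (WithLp.equiv 2 (Fin d → ℝ)).symm fun i => (k i : ℝ)

/-- A direction is rational if it is a real multiple of a nonzero integer vector. -/
def IsRatDir {d : ℕ} (ν : Spc d) : Prop :=
  ∃ k : Fin d → ℤ, intVec k ≠ 0 ∧ ∃ c : ℝ, ν = c • intVec k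

/-- Pucci maximal operator `P⁺(M) = Σ_{e>0} Λ e + Σ_{e<0} λ e` over the eigenvalues of `M`. -/
noncomputable def pucciPlus (lam Lam : ℝ) {d : ℕ} (M : Mat d) : ℝ :=
  if hM : M.IsHermitian then
    ∑ i, (Lam * max (hM.eigenvalues i) 0 + lam * min (hM.eigenvalues i) 0)
  else 0

noncomputable def timeDeriv {d : ℕ} (φ : Spc d × ℝ → ℝ) (p : Spc d × ℝ) : ℝ :=
  deriv (fun s => φ (p.1, s)) p.2

noncomputable def spaceGrad {d : ℕ} (φ : Spc d × ℝ → ℝ) (p : Spc d × ℝ) : Spc d :=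
  (WithLp.equiv 2 (Fin d → ℝ)).symm fun i =>
    fderiv ℝ (fun y => φ (y, p.2)) p.1 (EuclideanSpace.single i 1)

noncomputable def spaceHess {d : ℕ} (φ : Spc d × ℝ → ℝ) (p : Spc d × ℝ) : Mat d :=
  Matrix.of fun i j =>
    fderiv ℝ (fun y => (fderiv ℝ (fun z => φ (z, p.2)) y) (EuclideanSpace.single j 1))
      p.1 (EuclideanSpace.single i 1)

/-- Viscosity subsolution of `∂ₜ u - H(D²u, Du, (x,t)) = 0` on `O`. -/
def ViscSubsol {d : ℕ} (O : Set (Spc d × ℝ)) (u : Spc d × ℝ → ℝ)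
    (H : Mat d → Spc d → Spc d × ℝ → ℝ) : Prop :=
  ∀ φ : Spc d × ℝ → ℝ, ∀ p ∈ O, ContDiffAt ℝ 2 φ p →
    IsLocalMaxOn (fun q => u q - φ q) O p →
    timeDeriv φ p - H (spaceHess φ p) (spaceGrad φ p) p ≤ 0

/-- Viscosity supersolution of `∂ₜ u - H(D²u, Du, (x,t)) = 0` on `O`. -/
def ViscSupersol {d : ℕ} (O : Set (Spc d × ℝ)) (u : Spc d × ℝ → ℝ)
    (H : Mat d → Spc d → Spc d × ℝ → ℝ) : Prop :=
  ∀ φ : Spc d × ℝ → ℝ, ∀ p ∈ O, ContDiffAt ℝ 2 φ p →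
    IsLocalMinOn (fun q => u q - φ q) O p →
    0 ≤ timeDeriv φ p - H (spaceHess φ p) (spaceGrad φ p) p

/-- The half space `P_ν = {(x,t) : x·ν ≥ 0}`. -/
def Pnu {d : ℕ} (ν : Spc d) : Set (Spc d × ℝ) := {p | 0 ≤ dotR p.1 ν}
def bdryPnu {d : ℕ} (ν : Spc d) : Set (Spc d × ℝ) := {p | dotR p.1 ν = 0}
def intPnu {d : ℕ} (ν : Spc d) : Set (Spc d × ℝ) := {p | 0 < dotR p.1 ν}

/-- The box `Q_L = {0 < x_ν < L, |x'| < L, |t| < L²}`. -/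
def QL {d : ℕ} (ν : Spc d) (L : ℝ) : Set (Spc d × ℝ) :=
  {p | 0 < dotR p.1 ν ∧ dotR p.1 ν < L ∧ ‖p.1 - dotR p.1 ν • ν‖ < L ∧ |p.2| < L ^ 2}

def UnifElliptic {d : ℕ} {α : Type*} (lam Lam : ℝ) (F : Mat d → α → ℝ) : Prop :=
  ∀ M N : Mat d, M.IsSymm → N.PosSemidef → ∀ a : α,
    lam * N.trace ≤ F (M + N) a - F M a ∧ F (M + N) a - F M a ≤ Lam * N.trace

/-- Bounded viscosity solution of a Dirichlet problem on `O` with boundary part `bd`. -/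
def IsBddViscSolOn {d : ℕ} (O bd : Set (Spc d × ℝ)) (u : Spc d × ℝ → ℝ)
    (H : Mat d → Spc d → Spc d × ℝ → ℝ) (gbd : Spc d × ℝ → ℝ) : Prop :=
  ContinuousOn u (O ∪ bd) ∧ (∃ K : ℝ, ∀ p ∈ O ∪ bd, |u p| ≤ K) ∧
  ViscSubsol O u H ∧ ViscSupersol O u H ∧ ∀ p ∈ bd, u p = gbd p

/-- `ℤ^d × ℤ` space-time periodicity. -/
def SpaceTimePeriodic {d : ℕ} (ρ : Spc d × ℝ → ℝ) : Prop :=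
  ∀ (p : Spc d × ℝ) (k : Fin d → ℤ) (m : ℤ), ρ (p.1 + intVec k, p.2 + m) = ρ p

end


section AuxLemmas

open Filter Topology

private lemma usc_exists_max' {X : Type*} [MetricSpace X] {s : Set X} (hs : IsCompact s)
    (hne : s.Nonempty) {f : X → ℝ} (hf : UpperSemicontinuousOn f s) :
    ∃ a ∈ s, ∀ x ∈ s, f x ≤ f a := by
  have key : ∀ u : ℕ → X, (∀ n, u n ∈ s) → ∃ a ∈ s, ∃ ψ : ℕ → ℕ, StrictMono ψ ∧
      ∀ y : ℝ, f a < y → ∀ᶠ k in atTop, f (u (ψ k)) < y := by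
    intro u hu
    obtain ⟨a, ha, ψ, hψ, hua⟩ := hs.tendsto_subseq hu
    refine ⟨a, ha, ψ, hψ, fun y hy => ?_⟩
    have htd : Tendsto (u ∘ ψ) atTop (𝓝[s] a) :=
      tendsto_nhdsWithin_iff.2 ⟨hua, Eventually.of_forall fun k => hu _⟩
    exact htd.eventually (hf a ha y hy)
  have hbdd : BddAbove (f '' s) := by
    by_contra hb
    have h1 : ∀ n : ℕ, ∃ x ∈ s, (n : ℝ) < f x := by
      intro n
      rcases not_bddAbove_iff.1 hb (n : ℝ) with ⟨y, ⟨x, hx, rfl⟩, hy⟩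
      exact ⟨x, hx, hy⟩
    choose u hu hu' using h1
    obtain ⟨a, ha, ψ, hψ, hev⟩ := key u hu
    obtain ⟨N, hN⟩ := (eventually_atTop).1 (hev (f a + 1) (lt_add_one _))
    set k := max N (⌈f a + 1⌉₊) with hk
    have h2 : f (u (ψ k)) < f a + 1 := hN k (le_max_left _ _)
    have h3 : (ψ k : ℝ) < f (u (ψ k)) := hu' (ψ k)
    have h4 : (k : ℝ) ≤ (ψ k : ℝ) := by exact_mod_cast hψ.le_apply
    have h5 : f a + 1 ≤ (k : ℝ) := by
      calc f a + 1 ≤ (⌈f a + 1⌉₊ : ℝ) := Nat.le_ceil _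
      _ ≤ (k : ℝ) := by exact_mod_cast le_max_right _ _
    linarith
  set α := sSup (f '' s) with hα
  have h1 : ∀ n : ℕ, ∃ x ∈ s, α - 1/((n:ℝ)+1) < f x := by
    intro n
    have hlt : α - 1/((n:ℝ)+1) < α := by
      have : (0:ℝ) < 1/((n:ℝ)+1) := by positivity
      linarith
    rcases exists_lt_of_lt_csSup (hne.image f) hlt with ⟨y, ⟨x, hx, rfl⟩, hy⟩
    exact ⟨x, hx, hy⟩
  choose u hu hu' using h1
  obtain ⟨a, ha, ψ, hψ, hev⟩ := key u hu
  refine ⟨a, ha, fun x hx => ?_⟩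
  have hxα : f x ≤ α := le_csSup hbdd ⟨x, hx, rfl⟩
  have hfa : α ≤ f a := by
    by_contra hlt
    push_neg at hlt
    obtain ⟨y, hy1, hy2⟩ := exists_between hlt
    obtain ⟨n₀, hn₀⟩ := exists_nat_one_div_lt (show (0:ℝ) < α - y by linarith)
    obtain ⟨N, hN⟩ := (eventually_atTop).1 (hev y hy1)
    set k := max N n₀ with hk
    have h2 : f (u (ψ k)) < y := hN k (le_max_left _ _)
    have h3 : α - 1/((ψ k : ℝ)+1) < f (u (ψ k)) := hu' (ψ k)
    have h4 : (n₀ : ℝ) ≤ (ψ k : ℝ) := by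
      have ha1 : (k : ℝ) ≤ (ψ k : ℝ) := by exact_mod_cast hψ.le_apply
      have ha2 : (n₀ : ℝ) ≤ (k : ℝ) := by exact_mod_cast le_max_right _ _
      linarith
    have h5 : 1/((ψ k : ℝ)+1) ≤ 1/((n₀:ℝ)+1) := by
      apply one_div_le_one_div_of_le
      · positivity
      · linarith
    linarith
  linarith

private lemma sum_eig_eq_trace {d : ℕ} {M : Mat d} (hM : M.IsHermitian) :
    ∑ i, hM.eigenvalues i = M.trace := by
  rw [hM.trace_eq_sum_eigenvalues]
  simp

private lemma pucci_le {d : ℕ} (hd : 1 ≤ d) {lam Lam : ℝ} (hlam : 0 < lam) (hll : lam ≤ Lam)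
    {ν : Spc d} (hν : ∑ i, ν i * ν i = 1) {a b : ℝ} (hb : 0 < b) (hab : a + b < 0) :
    pucciPlus lam Lam (Matrix.of fun i j => a * (ν i * ν j) + (if i = j then b else 0))
      ≤ ((d : ℝ) - 1) * (Lam * b) + lam * (a + b) := by
  set M : Mat d := Matrix.of fun i j => a * (ν i * ν j) + (if i = j then b else 0) with hMdef
  have ha : a < 0 := by nlinarith
  have hM : M.IsHermitian := by
    show M.conjTranspose = M
    ext i j
    by_cases h : i = j
    · subst h; simp [hMdef, Matrix.conjTranspose_apply]
    · simp [hMdef, Matrix.conjTranspose_apply, h, Ne.symm h, mul_comm]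
  have key : ∀ i, hM.eigenvalues i = b ∨ hM.eigenvalues i = a + b := by
    intro i
    have hv := hM.mulVec_eigenvectorBasis i
    set e := hM.eigenvalues i with hedef
    set v : Fin d → ℝ := ⇑(hM.eigenvectorBasis i) with hvdef
    have hvne : v ≠ 0 := by
      have h0 : hM.eigenvectorBasis i ≠ 0 := hM.eigenvectorBasis.orthonormal.ne_zero i
      intro h; exact h0 (by ext j; exact congrFun h j)
    set c : ℝ := ∑ k, ν k * v k with hcdef
    have hcomp : ∀ j, a * ν j * c + b * v j = e * v j := by
      intro j
      have h1 := congrFun hv j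
      simp only [Matrix.mulVec, dotProduct, hMdef, Matrix.of_apply, Pi.smul_apply,
        smul_eq_mul] at h1
      rw [← h1]
      rw [Finset.sum_congr rfl fun k _ => show (a * (ν j * ν k) + if j = k then b else 0) * v k
            = a * ν j * (ν k * v k) + (if j = k then b * v k else 0) from by
          by_cases h : j = k <;> simp [h] <;> ring]
      rw [Finset.sum_add_distrib, ← Finset.mul_sum, Finset.sum_ite_eq]
      simp [hcdef]
    by_cases hc : c = 0
    · left
      obtain ⟨j, hj⟩ := Function.ne_iff.1 hvne
      have h2 := hcomp j
      rw [hc] at h2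
      have h3 : b * v j = e * v j := by linarith [h2]
      have : v j ≠ 0 := by simpa using hj
      exact (mul_right_cancel₀ this h3).symm
    · right
      have hsum : ∑ j, (a * ν j * c + b * v j) * ν j = ∑ j, (e * v j) * ν j :=
        Finset.sum_congr rfl fun j _ => by rw [hcomp j]
      have hl : ∑ j, (a * ν j * c + b * v j) * ν j = a * c + b * c := by
        rw [Finset.sum_congr rfl fun j _ => show (a * ν j * c + b * v j) * ν j
              = a * c * (ν j * ν j) + b * (ν j * v j) from by ring]
        rw [Finset.sum_add_distrib, ← Finset.mul_sum, ← Finset.mul_sum, hν,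
          show ∑ j, ν j * v j = c from rfl]
        ring
      have hr : ∑ j, (e * v j) * ν j = e * c := by
        rw [Finset.sum_congr rfl fun j _ => show (e * v j) * ν j = e * (ν j * v j) from by ring]
        rw [← Finset.mul_sum, ← hcdef]
      rw [hl, hr] at hsum
      have : (a + b) * c = e * c := by ring_nf; ring_nf at hsum; linarith
      exact (mul_right_cancel₀ hc this).symm
  have htr : ∑ i, hM.eigenvalues i = a + (d : ℝ) * b := by
    rw [sum_eig_eq_trace hM]
    simp only [Matrix.trace, Matrix.diag, hMdef, Matrix.of_apply, if_pos rfl]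
    rw [Finset.sum_add_distrib, ← Finset.mul_sum, hν]
    simp [Finset.card_univ, mul_comm]
  have hex : ∃ i₀ : Fin d, hM.eigenvalues i₀ = a + b := by
    by_contra h
    push_neg at h
    have hall : ∀ i, hM.eigenvalues i = b := fun i => (key i).resolve_right (h i)
    rw [Finset.sum_congr rfl fun i _ => hall i] at htr
    simp [Finset.card_univ, nsmul_eq_mul] at htr
    nlinarith
  obtain ⟨i₀, hi₀⟩ := hex
  rw [show pucciPlus lam Lam M
      = ∑ i, (Lam * max (hM.eigenvalues i) 0 + lam * min (hM.eigenvalues i) 0) from by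
    rw [pucciPlus, dif_pos hM]]
  rw [← Finset.sum_erase_add _ _ (Finset.mem_univ i₀)]
  have h1 : Lam * max (hM.eigenvalues i₀) 0 + lam * min (hM.eigenvalues i₀) 0 = lam * (a + b) := by
    rw [hi₀, max_eq_right hab.le, min_eq_left hab.le]; ring
  have h2 : ∑ i ∈ Finset.univ.erase i₀, (Lam * max (hM.eigenvalues i) 0
      + lam * min (hM.eigenvalues i) 0) ≤ ((d : ℝ) - 1) * (Lam * b) := by
    have hcard : (Finset.univ.erase i₀).card = d - 1 := by
      simp [Finset.card_erase_of_mem, Finset.card_univ]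
    calc ∑ i ∈ Finset.univ.erase i₀, (Lam * max (hM.eigenvalues i) 0
          + lam * min (hM.eigenvalues i) 0)
        ≤ (Finset.univ.erase i₀).card • (Lam * b) := by
          apply Finset.sum_le_card_nsmul
          intro i _
          rcases key i with h | h
          · rw [h, max_eq_left hb.le, min_eq_right hb.le]
            nlinarith
          · rw [h, max_eq_right hab.le, min_eq_left hab.le]
            nlinarith
      _ = ((d : ℝ) - 1) * (Lam * b) := by
          rw [hcard, nsmul_eq_mul, Nat.cast_sub hd, Nat.cast_one]
  linarith

private lemma grad_step {d : ℕ} (ν : Spc d) (A0 A1 A2 A3 : ℝ) (j : Fin d) :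
    (fun y : Spc d => (fderiv ℝ (fun z : Spc d =>
        A0 + A1 * (inner ℝ ν z) + A2 * (inner ℝ ν z)^2 + A3 * (inner ℝ z z)) y)
      (EuclideanSpace.single j 1))
    = fun y : Spc d => A1 * ν j + 2 * A2 * (inner ℝ ν y) * ν j + 2 * A3 * y j := by
  funext y
  simp only [pow_two]
  have h1 : HasFDerivAt (fun z : Spc d => (inner ℝ ν z)) (innerSL ℝ ν) y :=
    (innerSL ℝ ν).hasFDerivAt
  have h3 : HasFDerivAt (fun z : Spc d => (inner ℝ z z))
      ((fderivInnerCLM ℝ (y, y)).comp ((ContinuousLinearMap.id ℝ (Spc d)).prod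
        (ContinuousLinearMap.id ℝ (Spc d)))) y := (hasFDerivAt_id y).inner ℝ (hasFDerivAt_id y)
  have h : HasFDerivAt (fun z : Spc d =>
      A0 + A1 * (inner ℝ ν z) + A2 * ((inner ℝ ν z) * (inner ℝ ν z)) + A3 * (inner ℝ z z))
      (((A1 • innerSL ℝ ν) + (A2 • (((inner ℝ ν y)) • innerSL ℝ ν + ((inner ℝ ν y)) • innerSL ℝ ν)))
        + (A3 • ((fderivInnerCLM ℝ (y, y)).comp ((ContinuousLinearMap.id ℝ (Spc d)).prod
          (ContinuousLinearMap.id ℝ (Spc d)))))) y := by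
    exact (((h1.const_mul A1).const_add A0).add ((h1.mul h1).const_mul A2)).add (h3.const_mul A3)
  rw [h.fderiv]
  simp only [ContinuousLinearMap.add_apply, ContinuousLinearMap.smul_apply,
    ContinuousLinearMap.comp_apply, ContinuousLinearMap.prod_apply, ContinuousLinearMap.id_apply,
    fderivInnerCLM_apply, innerSL_apply_apply, smul_eq_mul]
  have e1 : (inner ℝ ν (EuclideanSpace.single j (1:ℝ))) = ν j := by
    simp [EuclideanSpace.inner_single_right]
  have e2 : (inner ℝ y (EuclideanSpace.single j (1:ℝ))) = y j := by
    simp [EuclideanSpace.inner_single_right]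
  have e3 : (inner ℝ (EuclideanSpace.single j (1:ℝ)) y) = y j := by
    simp [EuclideanSpace.inner_single_left]
  rw [e1, e2, e3]
  ring

private lemma hess_entry {d : ℕ} (ν : Spc d) (A0 A1 A2 A3 : ℝ) (x : Spc d) (i j : Fin d) :
    fderiv ℝ (fun y : Spc d => (fderiv ℝ (fun z : Spc d =>
        A0 + A1 * (inner ℝ ν z) + A2 * (inner ℝ ν z)^2 + A3 * (inner ℝ z z)) y)
      (EuclideanSpace.single j 1)) x (EuclideanSpace.single i 1)
    = 2 * A2 * (ν i * ν j) + (if i = j then 2 * A3 else 0) := by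
  rw [grad_step ν A0 A1 A2 A3 j]
  have h1 : HasFDerivAt (fun y : Spc d => (inner ℝ ν y)) (innerSL ℝ ν) x :=
    (innerSL ℝ ν).hasFDerivAt
  have hp : HasFDerivAt (fun y : Spc d => y j) (EuclideanSpace.proj (𝕜 := ℝ) (ι := Fin d) j) x :=
    (EuclideanSpace.proj (𝕜 := ℝ) (ι := Fin d) j).hasFDerivAt
  have h : HasFDerivAt (fun y : Spc d => A1 * ν j + 2 * A2 * (inner ℝ ν y) * ν j + 2 * A3 * y j)
      (((ν j) • ((2 * A2) • innerSL ℝ ν)) + ((2 * A3) • EuclideanSpace.proj (𝕜 := ℝ) (ι := Fin d) j)) x := by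
    exact (((h1.const_mul (2 * A2)).mul_const (ν j)).const_add (A1 * ν j)).add (hp.const_mul (2 * A3))
  rw [h.fderiv]
  simp only [ContinuousLinearMap.add_apply, ContinuousLinearMap.smul_apply, innerSL_apply_apply,
    smul_eq_mul]
  have e1 : (inner ℝ ν (EuclideanSpace.single i (1:ℝ))) = ν i := by
    simp [EuclideanSpace.inner_single_right]
  have e2 : (EuclideanSpace.proj (𝕜 := ℝ) (ι := Fin d) j) (EuclideanSpace.single i (1:ℝ))
      = if i = j then 1 else 0 := by
    show (EuclideanSpace.single i (1:ℝ)) j = _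
    rw [EuclideanSpace.single_apply]
    by_cases h : i = j <;> simp [h, Ne.symm, eq_comm]
  rw [e1, e2]
  by_cases h : i = j
  · subst h; simp; ring
  · simp only [h, if_false]; ring

private lemma barrier_eq (c₀ C₀ L μ s Y t : ℝ) (hL : 0 < L) :
    (c₀ + C₀/L^4 * t^2) + (C₀*(1+2*μ)/L + C₀/L^5 * t^2) * s
      + (-(C₀*(1+μ)/L^2) - C₀/L^6 * t^2) * s^2 + C₀/L^2 * (Y + s^2)
    = c₀ + C₀/L^6 * (t^2*L^2 + (1+2*μ)*s*L^5 + t^2*s*L - μ*s^2*L^4 - t^2*s^2 + Y*L^4) := by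
  have h0 : L ≠ 0 := ne_of_gt hL
  field_simp
  ring

private lemma barrier_lb (c₀ C₀ L μ s Y t : ℝ) (hL : 0 < L) (hC₀ : 0 < C₀) (hμ : 1 ≤ μ)
    (hs0 : 0 ≤ s) (hsL : s ≤ L) (hY0 : 0 ≤ Y) (ht : |t| ≤ L^2) :
    c₀ ≤ (c₀ + C₀/L^4 * t^2) + (C₀*(1+2*μ)/L + C₀/L^5 * t^2) * s
      + (-(C₀*(1+μ)/L^2) - C₀/L^6 * t^2) * s^2 + C₀/L^2 * (Y + s^2) := by
  rw [barrier_eq c₀ C₀ L μ s Y t hL]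
  have hE : 0 ≤ t^2*L^2 + (1+2*μ)*s*L^5 + t^2*s*L - μ*s^2*L^4 - t^2*s^2 + Y*L^4 := by
    have k1 : 0 ≤ t^2 * ((L - s) * (L + s)) :=
      mul_nonneg (sq_nonneg t) (mul_nonneg (by linarith) (by linarith))
    have k2 : 0 ≤ (μ * s * L^4) * (L - s) := by
      have : 0 ≤ μ * s * L^4 := by positivity
      exact mul_nonneg this (by linarith)
    have k3 : 0 ≤ (1 + μ) * s * L^5 := by positivity
    have k4 : 0 ≤ t^2 * s * L := by positivity
    have k5 : 0 ≤ Y * L^4 := by positivity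
    nlinarith [k1, k2, k3, k4, k5]
  nlinarith [mul_nonneg (le_of_lt (show (0:ℝ) < C₀/L^6 by positivity)) hE]

private lemma barrier_bd (c₀ C₀ L μ s Y t : ℝ) (hL : 0 < L) (hC₀ : 0 < C₀) (hμ : 1 ≤ μ)
    (hs0 : 0 ≤ s) (hsL : s ≤ L) (hY0 : 0 ≤ Y) (ht : |t| ≤ L^2)
    (hcase : s = L ∨ Y = L^2 ∨ |t| = L^2) :
    c₀ + C₀ ≤ (c₀ + C₀/L^4 * t^2) + (C₀*(1+2*μ)/L + C₀/L^5 * t^2) * s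
      + (-(C₀*(1+μ)/L^2) - C₀/L^6 * t^2) * s^2 + C₀/L^2 * (Y + s^2) := by
  rw [barrier_eq c₀ C₀ L μ s Y t hL]
  have h6 : (0:ℝ) < L^6 := by positivity
  have hE : L^6 ≤ t^2*L^2 + (1+2*μ)*s*L^5 + t^2*s*L - μ*s^2*L^4 - t^2*s^2 + Y*L^4 := by
    have k1 : 0 ≤ t^2 * ((L - s) * (L + s)) :=
      mul_nonneg (sq_nonneg t) (mul_nonneg (by linarith) (by linarith))
    have k2 : 0 ≤ (μ * s * L^4) * (L - s) := by
      have : 0 ≤ μ * s * L^4 := by positivity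
      exact mul_nonneg this (by linarith)
    have k4 : 0 ≤ t^2 * s * L := by positivity
    have k5 : 0 ≤ Y * L^4 := by positivity
    have k3 : 0 ≤ (1 + μ) * s * L^5 := by positivity
    have k2v : 0 ≤ ((1 + μ) * s * L^4) * (L - s) := by
      have : 0 ≤ (1 + μ) * s * L^4 := by positivity
      exact mul_nonneg this (by linarith)
    rcases hcase with h | h | h
    · subst h
      nlinarith [sq_nonneg t, k5, mul_nonneg (sq_nonneg t) (pow_pos hL 3).le]
    · subst h
      nlinarith [k1, k2, k3, k4]
    · have ht2 : t^2 = L^4 := by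
        have h2 := sq_abs t
        rw [h] at h2
        nlinarith [h2]
      have e1 : t^2*L^2 = L^6 := by rw [ht2]; ring
      have e2 : t^2*s*L = s*L^5 := by rw [ht2]; ring
      have e3 : t^2*s^2 = L^4*s^2 := by rw [ht2]
      nlinarith [k2v, k3, k5, e1, e2, e3]
  have := mul_le_mul_of_nonneg_left hE (le_of_lt (show (0:ℝ) < C₀/L^6 by positivity))
  have heq : C₀/L^6 * L^6 = C₀ := by field_simp
  nlinarith [this, heq]

private lemma barrier_ub (c₀ C₀ L μ R s Y t : ℝ) (hL : 0 < L) (hC₀ : 0 < C₀) (hμ : 1 ≤ μ)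
    (hR : 0 < R) (hRL : R ≤ L) (hs0 : 0 ≤ s) (hsR : s ≤ R) (hY0 : 0 ≤ Y) (hYR : Y ≤ R^2)
    (ht : |t| ≤ R^2) :
    (c₀ + C₀/L^4 * t^2) + (C₀*(1+2*μ)/L + C₀/L^5 * t^2) * s
      + (-(C₀*(1+μ)/L^2) - C₀/L^6 * t^2) * s^2 + C₀/L^2 * (Y + s^2)
    ≤ c₀ + (C₀ * (4 + 2*μ)) * R / L := by
  rw [barrier_eq c₀ C₀ L μ s Y t hL]
  have ht2 : t^2 ≤ R^4 := by
    have h1 := sq_abs t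
    nlinarith [sq_abs t, abs_nonneg t, sq_nonneg (|t| - R^2)]
  have hR2 : R^2 ≤ L^2 := by nlinarith
  have hR3 : R^3 ≤ L^3 := by nlinarith
  have hR4 : R^4 ≤ L^4 := by nlinarith
  have hE : t^2*L^2 + (1+2*μ)*s*L^5 + t^2*s*L - μ*s^2*L^4 - t^2*s^2 + Y*L^4
      ≤ (4 + 2*μ) * R * L^5 := by
    have k1 : t^2*L^2 ≤ R*L^5 := by
      have c1 : t^2*L^2 ≤ R^4*L^2 := mul_le_mul_of_nonneg_right ht2 (sq_nonneg L)
      have c2 : (R*L^2)*R^3 ≤ (R*L^2)*L^3 :=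
        mul_le_mul_of_nonneg_left hR3 (by positivity)
      nlinarith [c1, c2]
    have k2 : (1+2*μ)*s*L^5 ≤ (1+2*μ)*R*L^5 := by
      have : 0 ≤ (1+2*μ) * L^5 := by positivity
      nlinarith [mul_le_mul_of_nonneg_left hsR this]
    have k3 : t^2*s*L ≤ R*L^5 := by
      have c1 : t^2*s ≤ R^4*R := mul_le_mul ht2 hsR hs0 (by positivity)
      have c2 : (R*L)*R^4 ≤ (R*L)*L^4 := mul_le_mul_of_nonneg_left hR4 (by positivity)
      nlinarith [mul_le_mul_of_nonneg_right c1 hL.le, c2]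
    have k4 : Y*L^4 ≤ R*L^5 := by
      have c1 : Y*L^4 ≤ R^2*L^4 := mul_le_mul_of_nonneg_right hYR (by positivity)
      have c2 : (R*L^4)*R ≤ (R*L^4)*L := mul_le_mul_of_nonneg_left hRL (by positivity)
      nlinarith [c1, c2]
    have k5 : 0 ≤ μ*s^2*L^4 := by positivity
    have k6 : 0 ≤ t^2*s^2 := by positivity
    linarith
  have hfrac : C₀/L^6 * (t^2*L^2 + (1+2*μ)*s*L^5 + t^2*s*L - μ*s^2*L^4 - t^2*s^2 + Y*L^4)
      ≤ C₀/L^6 * ((4 + 2*μ) * R * L^5) :=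
    mul_le_mul_of_nonneg_left hE (by positivity)
  have heq : C₀/L^6 * ((4 + 2*μ) * R * L^5) = (C₀ * (4 + 2*μ)) * R / L := by
    field_simp
  linarith [hfrac, heq ▸ hfrac]

set_option maxHeartbeats 1000000 in
private lemma numeric_contra (C₀ L lam Lam dd μ s t : ℝ) (hC₀ : 0 < C₀) (hL : 0 < L)
    (hlam : 0 < lam) (hll : lam ≤ Lam) (hdd : 1 ≤ dd) (hμeq : lam * μ = Lam * dd + 4)
    (hs0 : 0 ≤ s) (hsL : s ≤ L) (ht : |t| ≤ L^2) :
    ¬ (C₀/L^4*(2*t) + C₀/L^5*(2*t)*s - C₀/L^6*(2*t)*s^2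
      ≤ (dd - 1) * (Lam * (2 * (C₀/L^2)))
        + lam * (2 * (-(C₀*(1+μ)/L^2) - C₀/L^6*t^2) + 2*(C₀/L^2))) := by
  intro h
  have h6 : (0:ℝ) < L^6 := by positivity
  have h' := mul_le_mul_of_nonneg_left h h6.le
  have e1 : L^6 * (C₀/L^4*(2*t) + C₀/L^5*(2*t)*s - C₀/L^6*(2*t)*s^2)
      = 2*C₀*t*L^2 + 2*C₀*t*s*L - 2*C₀*t*s^2 := by
    field_simp
  have e2 : L^6 * ((dd - 1) * (Lam * (2 * (C₀/L^2)))
        + lam * (2 * (-(C₀*(1+μ)/L^2) - C₀/L^6*t^2) + 2*(C₀/L^2)))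
      = 2*C₀*L^4*(dd-1)*Lam - 2*C₀*L^4*lam*(1+μ) - 2*lam*C₀*t^2 + 2*C₀*L^4*lam := by
    field_simp; ring
  rw [e1, e2] at h'
  have habs := abs_le.1 ht
  have hQ0 : 0 ≤ L^2 + s*L - s^2 := by nlinarith
  have hQ1 : L^2 + s*L - s^2 ≤ (5/4)*L^2 := by nlinarith [sq_nonneg (s - L/2)]
  have k1 : 0 ≤ (t + L^2) * (L^2 + s*L - s^2) := mul_nonneg (by linarith [habs.1]) hQ0
  have k2 : 0 ≤ L^2 * ((5/4)*L^2 - (L^2 + s*L - s^2)) :=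
    mul_nonneg (by positivity) (by linarith)
  have P1 : 0 ≤ (2*C₀) * ((t + L^2) * (L^2 + s*L - s^2)) := mul_nonneg (by positivity) k1
  have P1' : 0 ≤ 2*C₀*t*L^2 + 2*C₀*t*s*L - 2*C₀*t*s^2 + 2*C₀*L^4 + 2*C₀*s*L^3
      - 2*C₀*s^2*L^2 := by nlinarith [P1]
  have P2 : 0 ≤ (2*C₀) * (L^2 * ((5/4)*L^2 - (L^2 + s*L - s^2))) :=
    mul_nonneg (by positivity) k2
  have P2' : 0 ≤ (5/2)*C₀*L^4 - 2*C₀*s*L^3 + 2*C₀*s^2*L^2 := by nlinarith [P2]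
  have hLam : 0 < Lam := lt_of_lt_of_le hlam hll
  have e4 : (dd-1)*Lam - lam*μ = -Lam - 4 := by rw [hμeq]; ring
  have P4 : 0 ≤ 2*C₀*L^4*Lam := by positivity
  have e5 : 2*C₀*L^4*((dd-1)*Lam - lam*μ) ≤ -(8*(C₀*L^4)) := by
    rw [e4]; nlinarith [P4]
  have e3 : 2*C₀*L^4*(dd-1)*Lam - 2*C₀*L^4*lam*(1+μ) - 2*lam*C₀*t^2 + 2*C₀*L^4*lam
      = 2*C₀*L^4*((dd-1)*Lam - lam*μ) - 2*lam*C₀*t^2 := by ring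
  have P3 : 0 ≤ 2*lam*C₀*t^2 := by positivity
  have P5 : 0 < C₀*L^4 := by positivity
  rw [e3] at h'
  linarith [h', P1', P2', e5, P3, P5]

end AuxLemmas

set_option maxHeartbeats 4000000 in
/-- Lemma 3.1: localization lemma for the Pucci maximal operator on the
box `Q_L`.  The constant `C` depends only on `λ, Λ, d, C₀`. -/
theorem stmt0 (d : ℕ) (hd : 1 ≤ d) (lam Lam C₀ : ℝ) (hlam : 0 < lam) (hll : lam ≤ Lam)
    (hC₀ : 0 < C₀) :
    ∃ C : ℝ, 0 < C ∧
      ∀ c₀ L R : ℝ, 0 < c₀ → c₀ < C₀ → 0 < R → R < L →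
      ∀ ν : Spc d, ‖ν‖ = 1 →
      ∀ w : Spc d × ℝ → ℝ,
        UpperSemicontinuousOn w (closure (QL ν L)) →
        ViscSubsol (QL ν L) w (fun M _ _ => pucciPlus lam Lam M) →
        (∀ p ∈ bdryPnu ν ∩ closure (QL ν L), w p ≤ c₀) →
        (∀ p ∈ closure (QL ν L), w p ≤ C₀) →
        ∀ p ∈ QL ν R, w p ≤ c₀ + C * R / L := by
  have hLam : 0 < Lam := lt_of_lt_of_le hlam hll
  have hdd : (1:ℝ) ≤ (d:ℝ) := by exact_mod_cast hd
  set μ : ℝ := (Lam * (d:ℝ) + 4) / lam with hμdef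
  have hμeq : lam * μ = Lam * (d:ℝ) + 4 := by
    rw [hμdef]; field_simp
  have hμ1 : 1 ≤ μ := by
    rw [hμdef, le_div_iff₀ hlam]
    nlinarith
  have hμpos : 0 < μ := lt_of_lt_of_le one_pos hμ1
  refine ⟨C₀ * (4 + 2*μ), by positivity, ?_⟩
  intro c₀ L R hc₀ hcC hR hRL ν hν w husc hsub hbd hbdC p hp
  have hL : 0 < L := hR.trans hRL
  -- inner product facts
  have hνν : (inner ℝ ν ν) = 1 := by
    rw [real_inner_self_eq_norm_sq, hν]; norm_num
  have hν2 : ∑ i, ν i * ν i = 1 := by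
    have h1 : (inner ℝ ν ν) = ∑ i, ν i * ν i := by
      simp only [PiLp.inner_apply, RCLike.inner_apply, conj_trivial]
    rw [← h1, hνν]
  have hSdot : ∀ x : Spc d, dotR x ν = (inner ℝ ν x) := by
    intro x
    simp [dotR, PiLp.inner_apply, RCLike.inner_apply, conj_trivial, mul_comm]
  have hYin : ∀ x : Spc d, ‖x - (inner ℝ ν x) • ν‖^2
      = (inner ℝ x x) - (inner ℝ ν x)^2 := by
    intro x
    rw [← real_inner_self_eq_norm_sq]
    simp only [inner_sub_left, inner_sub_right, real_inner_smul_left, real_inner_smul_right]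
    rw [hνν, real_inner_comm x ν]
    ring
  -- the barrier function
  set φ : Spc d × ℝ → ℝ := fun q =>
    (c₀ + C₀/L^4 * q.2^2) + (C₀*(1+2*μ)/L + C₀/L^5 * q.2^2) * (inner ℝ ν q.1)
      + (-(C₀*(1+μ)/L^2) - C₀/L^6 * q.2^2) * (inner ℝ ν q.1)^2
      + C₀/L^2 * (inner ℝ q.1 q.1) with hφdef
  have hφval : ∀ q : Spc d × ℝ, φ q =
      (c₀ + C₀/L^4 * q.2^2) + (C₀*(1+2*μ)/L + C₀/L^5 * q.2^2) * (dotR q.1 ν)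
      + (-(C₀*(1+μ)/L^2) - C₀/L^6 * q.2^2) * (dotR q.1 ν)^2
      + C₀/L^2 * (‖q.1 - dotR q.1 ν • ν‖^2 + (dotR q.1 ν)^2) := by
    intro q
    simp only [hφdef]
    rw [hSdot q.1, hYin q.1]
    ring
  -- continuity facts
  have hc1 : Continuous fun q : Spc d × ℝ => dotR q.1 ν := by
    have he : (fun q : Spc d × ℝ => dotR q.1 ν) = fun q : Spc d × ℝ => (inner ℝ ν q.1) :=
      funext fun q => hSdot q.1
    rw [he]
    exact (innerSL ℝ ν).continuous.comp continuous_fst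
  have hc2 : Continuous fun q : Spc d × ℝ => ‖q.1 - dotR q.1 ν • ν‖ :=
    (continuous_fst.sub (hc1.smul continuous_const)).norm
  have hc3 : Continuous fun q : Spc d × ℝ => |q.2| := continuous_snd.abs
  -- the closed superset of the closure
  have hKclosed : IsClosed ({q : Spc d × ℝ | 0 ≤ dotR q.1 ν} ∩ ({q | dotR q.1 ν ≤ L} ∩
      ({q | ‖q.1 - dotR q.1 ν • ν‖ ≤ L} ∩ {q | |q.2| ≤ L^2}))) :=
    (isClosed_le continuous_const hc1).inter ((isClosed_le hc1 continuous_const).inter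
      ((isClosed_le hc2 continuous_const).inter (isClosed_le hc3 continuous_const)))
  have hQK : QL ν L ⊆ {q : Spc d × ℝ | 0 ≤ dotR q.1 ν} ∩ ({q | dotR q.1 ν ≤ L} ∩
      ({q | ‖q.1 - dotR q.1 ν • ν‖ ≤ L} ∩ {q | |q.2| ≤ L^2})) :=
    fun q hq => ⟨hq.1.le, hq.2.1.le, hq.2.2.1.le, hq.2.2.2.le⟩
  have hclK : closure (QL ν L) ⊆ {q : Spc d × ℝ | 0 ≤ dotR q.1 ν} ∩ ({q | dotR q.1 ν ≤ L} ∩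
      ({q | ‖q.1 - dotR q.1 ν • ν‖ ≤ L} ∩ {q | |q.2| ≤ L^2})) :=
    closure_minimal hQK hKclosed
  -- compactness of the closure
  have hbball : QL ν L ⊆ Metric.closedBall (0 : Spc d × ℝ) (2*L + L^2) := by
    intro q hq
    rw [Metric.mem_closedBall, dist_zero_right, Prod.norm_def]
    apply max_le
    · have h1 : ‖q.1‖ ≤ ‖q.1 - dotR q.1 ν • ν‖ + ‖dotR q.1 ν • ν‖ := by
        have h0 := norm_add_le (q.1 - dotR q.1 ν • ν) (dotR q.1 ν • ν)
        simpa using h0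
      have h2 : ‖dotR q.1 ν • ν‖ = |dotR q.1 ν| := by
        rw [norm_smul, hν, mul_one, Real.norm_eq_abs]
      have h3 : |dotR q.1 ν| ≤ L := by
        rw [abs_of_pos hq.1]; exact hq.2.1.le
      have h4 := hq.2.2.1.le
      nlinarith [sq_nonneg L]
    · rw [Real.norm_eq_abs]
      have h4 := hq.2.2.2.le
      nlinarith [sq_nonneg L]
  have hcomp : IsCompact (closure (QL ν L)) := by
    have hsub2 : closure (QL ν L) ⊆ Metric.closedBall (0 : Spc d × ℝ) (2*L + L^2) :=
      closure_minimal hbball Metric.isClosed_closedBall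
    exact (isCompact_closedBall _ _).of_isClosed_subset isClosed_closure hsub2
  -- smoothness of φ
  have hφC : ContDiff ℝ 2 φ := by
    rw [hφdef]
    have hSc : ContDiff ℝ 2 fun q : Spc d × ℝ => (inner ℝ ν q.1) :=
      ((innerSL ℝ ν).contDiff).comp contDiff_fst
    have hNc : ContDiff ℝ 2 fun q : Spc d × ℝ => (inner ℝ q.1 q.1) :=
      ContDiff.inner ℝ contDiff_fst contDiff_fst
    have htc : ContDiff ℝ 2 fun q : Spc d × ℝ => q.2 ^ 2 := contDiff_snd.pow 2
    exact ((((contDiff_const.add (contDiff_const.mul htc)).add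
      ((contDiff_const.add (contDiff_const.mul htc)).mul hSc)).add
      (((contDiff_const.sub (contDiff_const.mul htc)).mul (hSc.pow 2)))).add
      (contDiff_const.mul hNc))
  -- spatial Hessian of φ
  have hhess : ∀ q : Spc d × ℝ, spaceHess φ q = Matrix.of fun i j =>
      (2 * (-(C₀*(1+μ)/L^2) - C₀/L^6 * q.2^2)) * (ν i * ν j)
      + (if i = j then 2 * (C₀/L^2) else 0) := by
    intro q
    ext i j
    simp only [spaceHess, Matrix.of_apply, hφdef]
    exact hess_entry ν (c₀ + C₀/L^4 * q.2^2) (C₀*(1+2*μ)/L + C₀/L^5 * q.2^2)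
      (-(C₀*(1+μ)/L^2) - C₀/L^6 * q.2^2) (C₀/L^2) q.1 i j
  -- time derivative of φ
  have htime : ∀ q : Spc d × ℝ, timeDeriv φ q
      = C₀/L^4*(2*q.2) + C₀/L^5*(2*q.2) * (dotR q.1 ν) - C₀/L^6*(2*q.2) * (dotR q.1 ν)^2 := by
    intro q
    have hs2 : HasDerivAt (fun s : ℝ => s^2) (2*q.2) q.2 := by
      simpa using hasDerivAt_pow 2 q.2
    have h : HasDerivAt (fun s : ℝ =>
        (c₀ + C₀/L^4 * s^2) + (C₀*(1+2*μ)/L + C₀/L^5 * s^2) * (inner ℝ ν q.1)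
        + (-(C₀*(1+μ)/L^2) - C₀/L^6 * s^2) * (inner ℝ ν q.1)^2
        + C₀/L^2 * (inner ℝ q.1 q.1))
        ((C₀/L^4 * (2*q.2)) + (C₀/L^5 * (2*q.2)) * (inner ℝ ν q.1)
          + (-(C₀/L^6 * (2*q.2))) * (inner ℝ ν q.1)^2) q.2 :=
      ((((hs2.const_mul (C₀/L^4)).const_add c₀).add
        (((hs2.const_mul (C₀/L^5)).const_add (C₀*(1+2*μ)/L)).mul_const _)).add
        (((hs2.const_mul (C₀/L^6)).const_sub (-(C₀*(1+μ)/L^2))).mul_const _)).add_const _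
    simp only [timeDeriv, hφdef]
    rw [h.deriv, hSdot q.1]
    ring
  -- Q_R is inside Q_L
  have hQRL : QL ν R ⊆ QL ν L := by
    intro q hq
    refine ⟨hq.1, hq.2.1.trans hRL, hq.2.2.1.trans hRL, lt_trans hq.2.2.2 (by nlinarith)⟩
  -- the comparison claim
  have hclaim : ∀ q ∈ closure (QL ν L), w q ≤ φ q := by
    by_contra hcon
    push_neg at hcon
    obtain ⟨q₀, hq₀, hwq₀⟩ := hcon
    have husc2 : UpperSemicontinuousOn (fun q => w q - φ q) (closure (QL ν L)) := by
      have h1 : UpperSemicontinuousOn (fun q : Spc d × ℝ => -φ q) (closure (QL ν L)) :=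
        (hφC.continuous.neg.continuousOn).upperSemicontinuousOn
      have h2 := husc.add h1
      simpa [sub_eq_add_neg] using h2
    obtain ⟨pb, hpbmem, hpmax⟩ := usc_exists_max' hcomp ⟨q₀, hq₀⟩ husc2
    have hpos : 0 < w pb - φ pb := lt_of_lt_of_le (by linarith) (hpmax q₀ hq₀)
    obtain ⟨hk1m, hk2m, hk3m, hk4m⟩ := hclK hpbmem
    have hk1 : (0:ℝ) ≤ dotR pb.1 ν := hk1m
    have hk2 : dotR pb.1 ν ≤ L := hk2m
    have hk3 : ‖pb.1 - dotR pb.1 ν • ν‖ ≤ L := hk3m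
    have hk4 : |pb.2| ≤ L^2 := hk4m
    have hpQL : pb ∈ QL ν L := by
      by_contra hnot
      have hwle : w pb ≤ φ pb := by
        by_cases hz : dotR pb.1 ν = 0
        · have h1 : w pb ≤ c₀ := hbd pb ⟨hz, hpbmem⟩
          have h2 := barrier_lb c₀ C₀ L μ (dotR pb.1 ν) (‖pb.1 - dotR pb.1 ν • ν‖^2) pb.2
            hL hC₀ hμ1 hk1 hk2 (sq_nonneg _) hk4
          rw [hφval pb]; linarith
        · have hz' : 0 < dotR pb.1 ν := lt_of_le_of_ne hk1 (Ne.symm hz)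
          have hcase : dotR pb.1 ν = L ∨ ‖pb.1 - dotR pb.1 ν • ν‖^2 = L^2 ∨ |pb.2| = L^2 := by
            rcases lt_or_eq_of_le hk2 with h2' | h2'
            · rcases lt_or_eq_of_le hk3 with h3' | h3'
              · rcases lt_or_eq_of_le hk4 with h4' | h4'
                · exact absurd ⟨hz', h2', h3', h4'⟩ hnot
                · exact Or.inr (Or.inr h4')
              · exact Or.inr (Or.inl (by rw [h3']))
            · exact Or.inl h2'
          have h2 := barrier_bd c₀ C₀ L μ (dotR pb.1 ν) (‖pb.1 - dotR pb.1 ν • ν‖^2) pb.2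
            hL hC₀ hμ1 hk1 hk2 (sq_nonneg _) hk4 hcase
          have h1 : w pb ≤ C₀ := hbdC pb hpbmem
          rw [hφval pb]; linarith
      linarith
    have hloc : IsLocalMaxOn (fun q => w q - φ q) (QL ν L) pb :=
      eventually_nhdsWithin_of_forall fun x hx => hpmax x (subset_closure hx)
    have hvisc : timeDeriv φ pb - pucciPlus lam Lam (spaceHess φ pb) ≤ 0 :=
      hsub φ pb hpQL hφC.contDiffAt hloc
    rw [htime pb, hhess pb] at hvisc
    have hb' : (0:ℝ) < 2 * (C₀/L^2) := by positivity
    have hab' : 2 * (-(C₀*(1+μ)/L^2) - C₀/L^6 * pb.2^2) + 2 * (C₀/L^2) < 0 := by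
      have hh1 : (0:ℝ) < C₀*μ/L^2 := by positivity
      have he : 2 * (-(C₀*(1+μ)/L^2) - C₀/L^6 * pb.2^2) + 2 * (C₀/L^2)
          = -(2*(C₀*μ/L^2)) - 2*(C₀/L^6*pb.2^2) := by field_simp; ring
      have hh2 : (0:ℝ) ≤ C₀/L^6*pb.2^2 := by positivity
      rw [he]; linarith
    have hPle := pucci_le (d := d) hd hlam hll hν2 hb' hab'
    exact numeric_contra C₀ L lam Lam (d:ℝ) μ (dotR pb.1 ν) pb.2 hC₀ hL hlam hll hdd hμeq
      hk1 hk2 hk4 (by linarith)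
  -- conclusion on Q_R
  have hpcl : p ∈ closure (QL ν L) := subset_closure (hQRL hp)
  have h1 : w p ≤ φ p := hclaim p hpcl
  have h2 : φ p ≤ c₀ + (C₀ * (4 + 2*μ)) * R / L := by
    rw [hφval p]
    exact barrier_ub c₀ C₀ L μ R (dotR p.1 ν) (‖p.1 - dotR p.1 ν • ν‖^2) p.2
      hL hC₀ hμ1 hR hRL.le hp.1.le hp.2.1.le (sq_nonneg _)
      (by nlinarith [hp.2.2.1, norm_nonneg (p.1 - dotR p.1 ν • ν)]) hp.2.2.2.le
  exact h1.trans h2
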